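/- For every v ∈ ℂ and every τ in the upper half-plane H, the Jacobi theta function θ₃ satisfies the two transformation laws θ₃(v, τ+1) = θ₂(v, τ) and θ₃(v, -1/τ) = (τ/i)^{1/2}·e^{π i τ v²}·θ₃(τ v, τ), where (τ/i)^{1/2} denotes the principal branch of the square root. -/

import Mathlib

set_option maxHeartbeats 1000000


open Complex Real

/-- `q = e^{2πiτ}`. -/
noncomputable def jq (τ : ℂ) : ℂ := Complex.exp (2 * (π : ℂ) * Complex.I * τ)

/-- `θ(v,τ) = 2 q^{1/8} sin(πv) ∏_{j=1}^∞ (1-q^j)(1-e^{2πiv}q^j)(1-e^{-2πiv}q^j)`. -/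
noncomputable def jTheta (v τ : ℂ) : ℂ :=
  2 * Complex.exp ((π : ℂ) * Complex.I * τ / 4) * Complex.sin ((π : ℂ) * v) *
    ∏' j : ℕ, ((1 - jq τ ^ (j + 1)) *
      (1 - Complex.exp (2 * (π : ℂ) * Complex.I * v) * jq τ ^ (j + 1)) *
      (1 - Complex.exp (-(2 * (π : ℂ) * Complex.I * v)) * jq τ ^ (j + 1)))

/-- `θ₁(v,τ) = 2 q^{1/8} cos(πv) ∏_{j=1}^∞ (1-q^j)(1+e^{2πiv}q^j)(1+e^{-2πiv}q^j)`. -/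
noncomputable def jTheta₁ (v τ : ℂ) : ℂ :=
  2 * Complex.exp ((π : ℂ) * Complex.I * τ / 4) * Complex.cos ((π : ℂ) * v) *
    ∏' j : ℕ, ((1 - jq τ ^ (j + 1)) *
      (1 + Complex.exp (2 * (π : ℂ) * Complex.I * v) * jq τ ^ (j + 1)) *
      (1 + Complex.exp (-(2 * (π : ℂ) * Complex.I * v)) * jq τ ^ (j + 1)))

/-- `θ₂(v,τ) = ∏_{j=1}^∞ (1-q^j)(1-e^{2πiv}q^{j-1/2})(1-e^{-2πiv}q^{j-1/2})`. -/
noncomputable def jTheta₂ (v τ : ℂ) : ℂ :=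
  ∏' j : ℕ, ((1 - jq τ ^ (j + 1)) *
    (1 - Complex.exp (2 * (π : ℂ) * Complex.I * v) *
      Complex.exp (2 * (π : ℂ) * Complex.I * τ * ((j : ℂ) + 1 / 2))) *
    (1 - Complex.exp (-(2 * (π : ℂ) * Complex.I * v)) *
      Complex.exp (2 * (π : ℂ) * Complex.I * τ * ((j : ℂ) + 1 / 2))))

/-- `θ₃(v,τ) = ∏_{j=1}^∞ (1-q^j)(1+e^{2πiv}q^{j-1/2})(1+e^{-2πiv}q^{j-1/2})`. -/
noncomputable def jTheta₃ (v τ : ℂ) : ℂ :=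
  ∏' j : ℕ, ((1 - jq τ ^ (j + 1)) *
    (1 + Complex.exp (2 * (π : ℂ) * Complex.I * v) *
      Complex.exp (2 * (π : ℂ) * Complex.I * τ * ((j : ℂ) + 1 / 2))) *
    (1 + Complex.exp (-(2 * (π : ℂ) * Complex.I * v)) *
      Complex.exp (2 * (π : ℂ) * Complex.I * τ * ((j : ℂ) + 1 / 2))))


namespace JT3
open Finset

noncomputable def Pq (q : ℂ) (k : ℕ) : ℂ := ∏ j ∈ Finset.range k, (1 - q ^ (j+1))

lemma Pq_succ (q : ℂ) (k : ℕ) : Pq q (k+1) = Pq q k * (1 - q^(k+1)) :=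
  Finset.prod_range_succ _ _

lemma one_sub_pow_ne {q : ℂ} (hq : ‖q‖ < 1) (k : ℕ) : 1 - q ^ (k+1) ≠ 0 := by
  intro h
  have h2 : q ^ (k+1) = 1 := by linear_combination -h
  have : ‖q ^ (k+1)‖ < 1 := by
    rw [norm_pow]
    exact pow_lt_one₀ (norm_nonneg q) hq (Nat.succ_ne_zero k)
  rw [h2] at this; simp at this

lemma Pq_ne {q : ℂ} (hq : ‖q‖ < 1) (k : ℕ) : Pq q k ≠ 0 :=
  Finset.prod_ne_zero_iff.mpr fun j _ => one_sub_pow_ne hq j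

lemma interior_id {q : ℂ} (hq : ‖q‖ < 1) (m k : ℕ) :
    Pq q (2*m+2*k+4) / (Pq q (2*m+k+2) * Pq q (k+2))
      = Pq q (2*m+2*k+2) / (Pq q (2*m+k+1) * Pq q (k+1)) * (1 + q^(2*m+2*k+3))
        + q^(k+2) * (Pq q (2*m+2*k+2) / (Pq q (2*m+k) * Pq q (k+2)))
        + q^(2*m+k+2) * (Pq q (2*m+2*k+2) / (Pq q (2*m+k+2) * Pq q k)) := by
  have He : Pq q (2*m+2*k+4) = Pq q (2*m+2*k+2) * (1 - q^(2*m+2*k+3)) * (1 - q^(2*m+2*k+4)) := by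
    rw [show 2*m+2*k+4 = (2*m+2*k+3)+1 by omega, Pq_succ,
      show 2*m+2*k+3 = (2*m+2*k+2)+1 by omega, Pq_succ]
  have Ha : Pq q (2*m+k+2) = Pq q (2*m+k) * (1 - q^(2*m+k+1)) * (1 - q^(2*m+k+2)) := by
    rw [show 2*m+k+2 = (2*m+k+1)+1 by omega, Pq_succ,
      show 2*m+k+1 = (2*m+k)+1 by omega, Pq_succ]
  have Hb : Pq q (2*m+k+1) = Pq q (2*m+k) * (1 - q^(2*m+k+1)) := by
    rw [show 2*m+k+1 = (2*m+k)+1 by omega, Pq_succ]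
  have Hc : Pq q (k+2) = Pq q k * (1 - q^(k+1)) * (1 - q^(k+2)) := by
    rw [show k+2 = (k+1)+1 by omega, Pq_succ, Pq_succ]
  have Hd : Pq q (k+1) = Pq q k * (1 - q^(k+1)) := by rw [Pq_succ]
  have h1 : Pq q (2*m+2*k+2) ≠ 0 := Pq_ne hq _
  have h2 : Pq q (2*m+k) ≠ 0 := Pq_ne hq _
  have h3 : Pq q k ≠ 0 := Pq_ne hq _
  have e1 : (1 : ℂ) - q^(2*m+2*k+3) ≠ 0 := one_sub_pow_ne hq (2*m+2*k+2)
  have e2 : (1 : ℂ) - q^(2*m+2*k+4) ≠ 0 := one_sub_pow_ne hq (2*m+2*k+3)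
  have e3 : (1 : ℂ) - q^(2*m+k+1) ≠ 0 := one_sub_pow_ne hq (2*m+k)
  have e4 : (1 : ℂ) - q^(2*m+k+2) ≠ 0 := one_sub_pow_ne hq (2*m+k+1)
  have e5 : (1 : ℂ) - q^(k+1) ≠ 0 := one_sub_pow_ne hq k
  have e6 : (1 : ℂ) - q^(k+2) ≠ 0 := one_sub_pow_ne hq (k+1)
  have d1 : Pq q (2*m+k+1) * Pq q (k+1) ≠ 0 := by
    rw [Hb, Hd]
    exact mul_ne_zero (mul_ne_zero h2 e3) (mul_ne_zero h3 e5)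
  have d2 : Pq q (2*m+k) * Pq q (k+2) ≠ 0 := by
    rw [Hc]
    exact mul_ne_zero h2 (mul_ne_zero (mul_ne_zero h3 e5) e6)
  have d3 : Pq q (2*m+k+2) * Pq q k ≠ 0 := by
    rw [Ha]
    exact mul_ne_zero (mul_ne_zero (mul_ne_zero h2 e3) e4) h3
  have dA : Pq q (2*m+k+2) * Pq q (k+2) ≠ 0 := by
    rw [Ha, Hc]
    exact mul_ne_zero (mul_ne_zero (mul_ne_zero h2 e3) e4)
      (mul_ne_zero (mul_ne_zero h3 e5) e6)
  simp only [div_mul_eq_mul_div, ← mul_div_assoc]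
  rw [div_add_div _ _ d1 d2, div_add_div _ _ (mul_ne_zero d1 d2) d3,
    div_eq_div_iff dA (mul_ne_zero (mul_ne_zero d1 d2) d3), He, Ha, Hb, Hc, Hd]
  simp only [pow_add, pow_mul']
  ring

lemma edge_id {q : ℂ} (hq : ‖q‖ < 1) (K : ℕ) :
    Pq q (2*K+4) / (Pq q (2*K+3) * Pq q 1)
      = Pq q (2*K+2) / (Pq q (2*K+2) * Pq q 0) * (1 + q^(2*K+3))
        + q^(1:ℕ) * (Pq q (2*K+2) / (Pq q (2*K+1) * Pq q 1)) := by
  have He : Pq q (2*K+4) = Pq q (2*K+2) * (1 - q^(2*K+3)) * (1 - q^(2*K+4)) := by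
    rw [show 2*K+4 = (2*K+3)+1 by omega, Pq_succ, show 2*K+3 = (2*K+2)+1 by omega, Pq_succ]
  have Ha : Pq q (2*K+3) = Pq q (2*K+2) * (1 - q^(2*K+3)) := by
    rw [show 2*K+3 = (2*K+2)+1 by omega, Pq_succ]
  have Hb : Pq q (2*K+2) = Pq q (2*K+1) * (1 - q^(2*K+2)) := by
    rw [show 2*K+2 = (2*K+1)+1 by omega, Pq_succ]
  have H1 : Pq q 1 = 1 - q^(1:ℕ) := by
    rw [show (1:ℕ) = 0+1 by omega, Pq_succ]; simp [Pq]
  have H0 : Pq q 0 = 1 := by simp [Pq]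
  have h1 : Pq q (2*K+2) ≠ 0 := Pq_ne hq _
  have h2 : Pq q (2*K+1) ≠ 0 := Pq_ne hq _
  have e1 : (1:ℂ) - q^(2*K+3) ≠ 0 := one_sub_pow_ne hq (2*K+2)
  have e2 : (1:ℂ) - q^(2*K+4) ≠ 0 := one_sub_pow_ne hq (2*K+3)
  have e3 : (1:ℂ) - q^(2*K+2) ≠ 0 := one_sub_pow_ne hq (2*K+1)
  have e4 : (1:ℂ) - q^(1:ℕ) ≠ 0 := one_sub_pow_ne hq 0
  have d0 : Pq q (2*K+3) * Pq q 1 ≠ 0 := mul_ne_zero (Ha ▸ mul_ne_zero h1 e1) (H1 ▸ e4)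
  have d1 : Pq q (2*K+2) * Pq q 0 ≠ 0 := by rw [H0]; exact mul_ne_zero h1 one_ne_zero
  have d2 : Pq q (2*K+1) * Pq q 1 ≠ 0 := mul_ne_zero h2 (H1 ▸ e4)
  simp only [div_mul_eq_mul_div, ← mul_div_assoc]
  rw [div_add_div _ _ d1 d2, div_eq_div_iff d0 (mul_ne_zero d1 d2), He, Ha, Hb, H1, H0]
  ring

noncomputable def cc (q : ℂ) (N : ℕ) (n : ℤ) : ℂ :=
  if n.natAbs ≤ N then Pq q (2*N) / (Pq q ((N:ℤ)+n).toNat * Pq q ((N:ℤ)-n).toNat) else 0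

lemma cc_neg (q : ℂ) (N : ℕ) (n : ℤ) : cc q N (-n) = cc q N n := by
  unfold cc
  rw [Int.natAbs_neg]
  rcases le_or_gt n.natAbs N with h | h
  · simp only [h, if_true]
    rw [mul_comm]
    ring_nf
  · simp [h.not_ge]

lemma cc_eq_zero {q : ℂ} {N : ℕ} {n : ℤ} (h : N < n.natAbs) : cc q N n = 0 := by
  unfold cc
  rw [if_neg (by omega)]

lemma cc_eval (q : ℂ) (N : ℕ) (n : ℤ) (h : n.natAbs ≤ N) (A B : ℕ)
    (hA : (A:ℤ) = N + n) (hB : (B:ℤ) = N - n) :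
    cc q N n = Pq q (2*N) / (Pq q A * Pq q B) := by
  unfold cc
  rw [if_pos h]
  rw [show ((N:ℤ)+n).toNat = A by omega, show ((N:ℤ)-n).toNat = B by omega]

lemma crec {q : ℂ} (hq : ‖q‖ < 1) (N : ℕ) (n : ℤ) :
    cc q (N+1) n = cc q N n * (1 + q^(2*N+1)) + q^((N:ℤ)+1-n) * cc q N (n-1)
      + q^((N:ℤ)+1+n) * cc q N (n+1) := by
  have main : ∀ m : ℕ, cc q (N+1) m = cc q N m * (1 + q^(2*N+1))
      + q^((N:ℤ)+1-m) * cc q N (m-1) + q^((N:ℤ)+1+m) * cc q N (m+1) := by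
    intro m
    rcases Nat.lt_or_ge m N with h1 | h1
    · -- interior : m + 1 ≤ N
      obtain ⟨k, rfl⟩ : ∃ k, N = m + k + 1 := ⟨N - m - 1, by omega⟩
      rw [cc_eval q _ m (by omega) (2*m+k+2) (k+2) (by push_cast; omega) (by push_cast; omega),
        cc_eval q _ m (by omega) (2*m+k+1) (k+1) (by push_cast; omega) (by push_cast; omega),
        cc_eval q _ ((m:ℤ)-1) (by omega) (2*m+k) (k+2) (by push_cast; omega) (by push_cast; omega),
        cc_eval q _ ((m:ℤ)+1) (by omega) (2*m+k+2) (k) (by push_cast; omega) (by push_cast; omega),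
        show ((m+k+1:ℕ):ℤ)+1-m = ((k+2:ℕ):ℤ) by push_cast; omega,
        show ((m+k+1:ℕ):ℤ)+1+m = ((2*m+k+2:ℕ):ℤ) by push_cast; omega,
        zpow_natCast, zpow_natCast,
        show 2*(m+k+1+1) = 2*m+2*k+4 by omega,
        show 2*(m+k+1)+1 = 2*m+2*k+3 by omega,
        show 2*(m+k+1) = 2*m+2*k+2 by omega]
      exact interior_id hq m k
    · rcases Nat.eq_or_lt_of_le h1 with heq | h2
      · -- m = N
        subst heq
        rcases Nat.eq_zero_or_pos N with rfl | hN
        · -- N = m = 0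
          norm_num
          rw [cc_eval q 1 0 (by omega) 1 1 (by omega) (by omega),
            cc_eval q 0 0 (by omega) 0 0 (by omega) (by omega),
            cc_eq_zero (q := q) (N := 0) (n := -1) (by omega),
            cc_eq_zero (q := q) (N := 0) (n := 1) (by omega)]
          have H1 : Pq q 1 = 1 - q^(1:ℕ) := by
            rw [show (1:ℕ) = 0+1 by omega, Pq_succ]; simp [Pq]
          have H2 : Pq q 2 = (1 - q^(1:ℕ)) * (1 - q^(2:ℕ)) := by
            rw [show (2:ℕ) = 1+1 by omega, Pq_succ, H1]
          have H0 : Pq q 0 = 1 := by simp [Pq]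
          have e1 : (1:ℂ) - q^(1:ℕ) ≠ 0 := one_sub_pow_ne hq 0
          have e2 : (1:ℂ) - q^(2:ℕ) ≠ 0 := one_sub_pow_ne hq 1
          rw [H2, H1, H0, div_eq_iff (mul_ne_zero e1 e1)]
          ring
        · obtain ⟨K, rfl⟩ : ∃ K, N = K + 1 := ⟨N - 1, by omega⟩
          rw [cc_eval q _ ((K+1:ℕ):ℤ) (by omega) (2*K+3) 1 (by push_cast; omega) (by push_cast; omega),
            cc_eval q _ ((K+1:ℕ):ℤ) (by omega) (2*K+2) 0 (by push_cast; omega) (by push_cast; omega),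
            cc_eval q _ (((K+1:ℕ):ℤ)-1) (by omega) (2*K+1) 1 (by push_cast; omega) (by push_cast; omega),
            cc_eq_zero (q := q) (N := K+1) (n := ((K+1:ℕ):ℤ)+1) (by omega),
            show ((K+1:ℕ):ℤ)+1-((K+1:ℕ):ℤ) = ((1:ℕ):ℤ) by push_cast; omega,
            zpow_natCast, mul_zero, add_zero,
            show 2*(K+1+1) = 2*K+4 by omega,
            show 2*(K+1)+1 = 2*K+3 by omega,
            show 2*(K+1) = 2*K+2 by omega]
          exact edge_id hq K
      · -- m ≥ N + 1
        rcases Nat.eq_or_lt_of_le h2 with heq | h3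
        · -- m = N + 1
          have hm : m = N + 1 := heq.symm
          subst hm
          push_cast
          rw [cc_eval q (N+1) ((N:ℤ)+1) (by omega) (2*N+2) 0 (by push_cast; omega) (by push_cast; omega),
            cc_eq_zero (by omega),
            show ((N:ℤ)+1) - 1 = ((N:ℕ):ℤ) by push_cast; omega,
            cc_eval q N (N:ℤ) (by omega) (2*N) 0 (by push_cast; omega) (by push_cast; omega),
            cc_eq_zero (by omega),
            show ((N:ℕ):ℤ)+1-((N:ℤ)+1) = 0 by push_cast; omega, zpow_zero,
            show 2*(N+1) = 2*N+2 by omega]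
          have H0 : Pq q 0 = 1 := by simp [Pq]
          rw [H0, mul_one, mul_one, div_self (Pq_ne hq (2*N+2)), div_self (Pq_ne hq (2*N))]
          ring
        · -- m ≥ N + 2
          rw [cc_eq_zero (by omega), cc_eq_zero (by omega),
            cc_eq_zero (q := q) (N := N) (n := (m:ℤ)-1) (by omega),
            cc_eq_zero (q := q) (N := N) (n := (m:ℤ)+1) (by omega)]
          ring
  rcases le_or_gt 0 n with hn | hn
  · obtain ⟨m, rfl⟩ := Int.eq_ofNat_of_zero_le hn
    exact main m
  · obtain ⟨m, rfl⟩ : ∃ m : ℕ, n = -m := ⟨n.natAbs, by omega⟩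
    have e1 : -(m:ℤ) - 1 = -((m:ℤ)+1) := by ring
    have e2 : -(m:ℤ) + 1 = -((m:ℤ)-1) := by ring
    rw [e1, e2, cc_neg, cc_neg, cc_neg,
      show ((N:ℤ)+1 - -↑m) = (N:ℤ)+1+m by ring,
      show ((N:ℤ)+1 + -↑m) = (N:ℤ)+1-m by ring, main m]
    ring_nf
    rw [show ((1:ℤ) - ↑m) = -(-1 + ↑m) by ring, cc_neg]

noncomputable def gg (Q x : ℂ) (N : ℕ) (n : ℤ) : ℂ := cc (Q^2) N n * Q^(n^2) * x^n

lemma gg_zero {Q x : ℂ} {N : ℕ} {n : ℤ} (h : N < n.natAbs) : gg Q x N n = 0 := by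
  rw [gg, cc_eq_zero h, zero_mul, zero_mul]

lemma sum_gg_subset (Q x : ℂ) (N : ℕ) (s : Finset ℤ) (hs : Finset.Icc (-(N:ℤ)) N ⊆ s) :
    ∑ n ∈ s, gg Q x N n = ∑ n ∈ Finset.Icc (-(N:ℤ)) N, gg Q x N n :=
  (Finset.sum_subset hs (fun n _ hn => gg_zero (by
    simp only [Finset.mem_Icc] at hn; omega))).symm

lemma sum_shift (f : ℤ → ℂ) (c a b : ℤ) :
    ∑ n ∈ Finset.Icc a b, f (n + c) = ∑ n ∈ Finset.Icc (a+c) (b+c), f n := by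
  rw [← Finset.map_add_right_Icc, Finset.sum_map]
  rfl

lemma finid {Q x : ℂ} (hQ : ‖Q‖ < 1) (hQ0 : Q ≠ 0) (hx : x ≠ 0) (N : ℕ) :
    ∏ j ∈ Finset.range N, ((1 + x*Q^(2*j+1)) * (1 + x⁻¹*Q^(2*j+1)))
      = ∑ n ∈ Finset.Icc (-(N:ℤ)) N, gg Q x N n := by
  have hq2 : ‖Q^2‖ < 1 := by
    rw [norm_pow]
    exact pow_lt_one₀ (norm_nonneg Q) hQ (by omega)
  induction N with
  | zero =>
    simp [gg, cc, Pq]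
  | succ N ih =>
    rw [Finset.prod_range_succ, ih]
    have hmul : (1 + x*Q^(2*N+1)) * (1 + x⁻¹*Q^(2*N+1))
        = 1 + (Q^2)^(2*N+1) + Q^(2*N+1)*x + Q^(2*N+1)*x⁻¹ := by
      field_simp
      ring
    -- termwise recurrence in gg form
    have QQ : ∀ (a b c : ℤ), a + b = c → Q^a * Q^b = Q^c := fun a b c h => by
      rw [← zpow_add₀ hQ0, h]
    have key : ∀ n : ℤ, gg Q x (N+1) n =
        gg Q x N n * (1 + (Q^2)^(2*N+1))
        + gg Q x N (n-1) * (Q^(2*N+1) * x)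
        + gg Q x N (n+1) * (Q^(2*N+1) * x⁻¹) := by
      intro n
      unfold gg
      rw [crec hq2 N n]
      have base2 : ∀ e : ℤ, ((Q^2:ℂ))^(e:ℤ) = Q^(2*e) := fun e => by
        rw [← zpow_natCast Q 2, ← zpow_mul]
        norm_num
      have hxs : (x:ℂ)^(n-1) * x = x^n := by
        rw [← zpow_add_one₀ hx]
        norm_num
      have hxs' : (x:ℂ)^(n+1) * x⁻¹ = x^n := by
        rw [← zpow_sub_one₀ hx]
        norm_num
      have hQn : ∀ m : ℤ, (Q:ℂ)^((2:ℕ)*N+1) = Q^((2*N+1 : ℤ)) := fun _ => by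
        rw [← zpow_natCast Q (2*N+1)]
        norm_num
      have h2 : (Q^2:ℂ)^((N:ℤ)+1-n) * Q^((n^2 : ℤ)) * x^n
          = Q^(((n-1)^2 : ℤ)) * x^(n-1) * (Q^(2*N+1) * x) := by
        rw [base2, hQn 0]
        calc Q^(2*((N:ℤ)+1-n)) * Q^((n^2:ℤ)) * x^n
            = (Q^(2*((N:ℤ)+1-n)) * Q^((n^2:ℤ))) * x^n := by ring
          _ = Q^(((n-1)^2 : ℤ) + (2*(N:ℤ)+1)) * x^n := by
              rw [QQ (2*((N:ℤ)+1-n)) ((n:ℤ)^2) (((n-1)^2 : ℤ) + (2*(N:ℤ)+1)) (by ring)]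
          _ = Q^(((n-1)^2 : ℤ)) * Q^((2*(N:ℤ)+1:ℤ)) * x^n := by
              rw [QQ ((n-1)^2) (2*(N:ℤ)+1) (((n-1)^2 : ℤ) + (2*(N:ℤ)+1)) rfl]
          _ = _ := by rw [← hxs]; ring
      have h3 : (Q^2:ℂ)^((N:ℤ)+1+n) * Q^((n^2 : ℤ)) * x^n
          = Q^(((n+1)^2 : ℤ)) * x^(n+1) * (Q^(2*N+1) * x⁻¹) := by
        rw [base2, hQn 0]
        calc Q^(2*((N:ℤ)+1+n)) * Q^((n^2:ℤ)) * x^n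
            = (Q^(2*((N:ℤ)+1+n)) * Q^((n^2:ℤ))) * x^n := by ring
          _ = Q^(((n+1)^2 : ℤ) + (2*(N:ℤ)+1)) * x^n := by
              rw [QQ (2*((N:ℤ)+1+n)) ((n:ℤ)^2) (((n+1)^2 : ℤ) + (2*(N:ℤ)+1)) (by ring)]
          _ = Q^(((n+1)^2 : ℤ)) * Q^((2*(N:ℤ)+1:ℤ)) * x^n := by
              rw [QQ ((n+1)^2) (2*(N:ℤ)+1) (((n+1)^2 : ℤ) + (2*(N:ℤ)+1)) rfl]
          _ = _ := by rw [← hxs']; ring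
      calc (cc (Q^2) N n * (1 + (Q^2)^(2*N+1)) + (Q^2)^((N:ℤ)+1-n) * cc (Q^2) N (n-1)
              + (Q^2)^((N:ℤ)+1+n) * cc (Q^2) N (n+1)) * Q^(n^2) * x^n
          = cc (Q^2) N n * Q^(n^2) * x^n * (1 + (Q^2)^(2*N+1))
            + cc (Q^2) N (n-1) * ((Q^2)^((N:ℤ)+1-n) * Q^((n^2:ℤ)) * x^n)
            + cc (Q^2) N (n+1) * ((Q^2)^((N:ℤ)+1+n) * Q^((n^2:ℤ)) * x^n) := by ring
        _ = _ := by rw [h2, h3]; ring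
    -- sum manipulation
    rw [show ((N:ℕ)+1 : ℕ) = N+1 from rfl]
    have expand : ∑ n ∈ Finset.Icc (-((N:ℤ)+1)) ((N:ℤ)+1), gg Q x (N+1) n
        = (∑ n ∈ Finset.Icc (-((N:ℤ)+1)) ((N:ℤ)+1), gg Q x N n) * (1 + (Q^2)^(2*N+1))
          + (∑ n ∈ Finset.Icc (-((N:ℤ)+1)) ((N:ℤ)+1), gg Q x N (n-1)) * (Q^(2*N+1) * x)
          + (∑ n ∈ Finset.Icc (-((N:ℤ)+1)) ((N:ℤ)+1), gg Q x N (n+1)) * (Q^(2*N+1) * x⁻¹) := by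
      rw [Finset.sum_mul, Finset.sum_mul, Finset.sum_mul, ← Finset.sum_add_distrib,
        ← Finset.sum_add_distrib]
      exact Finset.sum_congr rfl fun n _ => key n
    have c1 : ∑ n ∈ Finset.Icc (-((N:ℤ)+1)) ((N:ℤ)+1), gg Q x N n
        = ∑ n ∈ Finset.Icc (-(N:ℤ)) N, gg Q x N n := by
      apply sum_gg_subset
      intro t ht
      simp only [Finset.mem_Icc] at *
      omega
    have c2 : ∑ n ∈ Finset.Icc (-((N:ℤ)+1)) ((N:ℤ)+1), gg Q x N (n-1)
        = ∑ n ∈ Finset.Icc (-(N:ℤ)) N, gg Q x N n := by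
      have : ∀ n : ℤ, gg Q x N (n-1) = gg Q x N (n + (-1)) := fun n => by
        rw [sub_eq_add_neg]
      simp only [this]
      rw [sum_shift (gg Q x N) (-1)]
      apply sum_gg_subset
      intro t ht
      simp only [Finset.mem_Icc] at *
      omega
    have c3 : ∑ n ∈ Finset.Icc (-((N:ℤ)+1)) ((N:ℤ)+1), gg Q x N (n+1)
        = ∑ n ∈ Finset.Icc (-(N:ℤ)) N, gg Q x N n := by
      have : ∀ n : ℤ, gg Q x N (n+1) = gg Q x N (n + 1) := fun n => rfl
      rw [sum_shift (gg Q x N) 1]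
      apply sum_gg_subset
      intro t ht
      simp only [Finset.mem_Icc] at *
      omega
    have hcast : (((N:ℕ)+1 : ℕ) : ℤ) = (N:ℤ)+1 := by push_cast; ring
    rw [show (-(((N:ℕ)+1:ℕ):ℤ)) = -((N:ℤ)+1) by rw [hcast], hcast, expand, c1, c2, c3, hmul]
    ring

open Filter Topology in
lemma hasProd_zero_of_exists_zero {f : ℕ → ℂ} {j : ℕ} (h : f j = 0) : HasProd f 0 := by
  unfold HasProd
  have hev : ∀ᶠ s : Finset ℕ in atTop, ∏ i ∈ s, f i = 0 := by
    filter_upwards [Filter.eventually_ge_atTop {j}] with s hs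
    exact Finset.prod_eq_zero (by simpa using hs) h
  exact Filter.Tendsto.congr' (Filter.EventuallyEq.symm hev) tendsto_const_nhds

open Filter Topology in
lemma prod_one_add {f : ℕ → ℂ} (hf : Summable f) (hne : ∀ n, 1 + f n ≠ 0) :
    Multipliable (fun n => 1 + f n) ∧ (∏' n, (1 + f n)) ≠ 0 := by
  have hlog : Summable (fun n => Complex.log (1 + f n)) := by
    have hsmall : ∀ᶠ n in Filter.cofinite, ‖f n‖ ≤ 1/2 := by
      have h0 := hf.tendsto_cofinite_zero
      have h1 : ∀ᶠ n in Filter.cofinite, dist (f n) 0 < 1/2 :=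
        h0 (Metric.ball_mem_nhds 0 (by norm_num))
      filter_upwards [h1] with n hn
      rw [dist_zero_right] at hn
      exact hn.le
    apply Summable.of_norm_bounded_eventually (g := fun n => 3/2*‖f n‖) (hf.norm.mul_left _)
    filter_upwards [hsmall] with n hn
    exact Complex.norm_log_one_add_half_le_self hn
  constructor
  · exact Complex.multipliable_of_summable_log hlog
  · have := Complex.cexp_tsum_eq_tprod (f := fun n => 1 + f n) hne hlog
    beta_reduce at this
    rw [← this]
    exact Complex.exp_ne_zero _

open Filter Topology in
lemma real_pos_prod {r : ℝ} (hr0 : 0 ≤ r) (hr : r < 1) :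
    ∃ D : ℝ, 0 < D ∧ ∀ k, D ≤ ∏ j ∈ Finset.range k, (1 - r^(j+1)) := by
  have hfac : ∀ j : ℕ, 0 < 1 - r^(j+1) := fun j => by
    have : r^(j+1) < 1 := pow_lt_one₀ hr0 hr (Nat.succ_ne_zero j)
    linarith
  have hfac1 : ∀ j : ℕ, 1 - r^(j+1) ≤ 1 := fun j => by
    have : 0 ≤ r^(j+1) := pow_nonneg hr0 _
    linarith
  have hr1 : (0:ℝ) < 1 - r := by linarith
  have hlog : Summable (fun j => Real.log (1 - r^(j+1))) := by
    apply Summable.of_norm_bounded (g := fun j => (1-r)⁻¹ * r^(j+1))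
    · exact ((summable_geometric_of_lt_one hr0 hr).mul_left _ |>.comp_injective
        (add_left_injective 1)).congr (fun j => rfl)
    · intro j
      have hx : (0:ℝ) ≤ r^(j+1) := pow_nonneg hr0 _
      have hlog_le : Real.log ((1 - r^(j+1))⁻¹) ≤ (1 - r^(j+1))⁻¹ - 1 :=
        Real.log_le_sub_one_of_pos (inv_pos.mpr (hfac j))
      have heq : (1 - r^(j+1))⁻¹ - 1 = r^(j+1) / (1 - r^(j+1)) := by
        rw [eq_div_iff (hfac j).ne', sub_mul, inv_mul_cancel₀ (hfac j).ne']
        ring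
      have hle2 : r^(j+1) / (1 - r^(j+1)) ≤ (1-r)⁻¹ * r^(j+1) := by
        rw [div_eq_mul_inv, mul_comm]
        apply mul_le_mul_of_nonneg_right _ hx
        apply inv_anti₀ hr1
        have : r^(j+1) ≤ r := by
          calc r^(j+1) ≤ r^1 := pow_le_pow_of_le_one hr0 hr.le (by omega)
          _ = r := pow_one r
        linarith
      rw [Real.norm_eq_abs, abs_of_nonpos (Real.log_nonpos (by linarith [hfac j]) (hfac1 j)),
        ← Real.log_inv]
      calc Real.log ((1 - r^(j+1))⁻¹) ≤ (1 - r^(j+1))⁻¹ - 1 := hlog_le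
        _ = r^(j+1) / (1 - r^(j+1)) := heq
        _ ≤ (1-r)⁻¹ * r^(j+1) := hle2
  set D := ∏' j : ℕ, (1 - r^(j+1)) with hD
  have hprod_eq := Real.rexp_tsum_eq_tprod (f := fun j => 1 - r^(j+1)) hfac hlog
  beta_reduce at hprod_eq
  have hDpos : 0 < D := by
    rw [hD, ← hprod_eq]
    exact Real.exp_pos _
  have hmult : Multipliable (fun j : ℕ => 1 - r^(j+1)) :=
    Real.multipliable_of_summable_log hfac hlog
  refine ⟨D, hDpos, fun k => ?_⟩
  have htend : Filter.Tendsto (fun k => ∏ j ∈ Finset.range k, (1 - r^(j+1)))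
      atTop (𝓝 D) := hmult.hasProd.tendsto_prod_nat
  apply le_of_tendsto htend
  filter_upwards [Filter.eventually_ge_atTop k] with k' hk'
  obtain ⟨l, rfl⟩ : ∃ l, k' = k + l := ⟨k' - k, by omega⟩
  rw [Finset.prod_range_add]
  have h1 : ∏ j ∈ Finset.range l, (1 - r^(k+j+1)) ≤ 1 :=
    Finset.prod_le_one (fun j _ => (hfac (k+j)).le) (fun j _ => hfac1 (k+j))
  calc (∏ j ∈ Finset.range k, (1 - r^(j+1))) * ∏ j ∈ Finset.range l, (1 - r^(k+j+1))
      ≤ (∏ j ∈ Finset.range k, (1 - r^(j+1))) * 1 := by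
        apply mul_le_mul_of_nonneg_left h1
        exact Finset.prod_nonneg (fun j _ => (hfac j).le)
    _ = _ := mul_one _

open Filter Topology

lemma summable_qpow {q : ℂ} (hq : ‖q‖ < 1) : Summable (fun j : ℕ => q^(j+1)) := by
  have := summable_geometric_of_norm_lt_one hq
  exact (this.mul_left q).congr (fun j => by rw [pow_succ]; ring)

theorem master {Q x : ℂ} (hQ : ‖Q‖ < 1) (hQ0 : Q ≠ 0) (hx : x ≠ 0)
    (hsum : Summable (fun n : ℤ => ‖Q^((n^2 : ℤ)) * x^n‖)) :
    ∑' n : ℤ, Q^((n^2:ℤ)) * x^n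
      = (∏' j : ℕ, (1 - (Q^2) ^ (j+1)))
        * ∏' j : ℕ, ((1 + x * Q ^ (2*j+1)) * (1 + x⁻¹ * Q ^ (2*j+1))) := by
  have hq2 : ‖Q^2‖ < 1 := by
    rw [norm_pow]
    exact pow_lt_one₀ (norm_nonneg Q) hQ (by omega)
  set q : ℂ := Q^2 with hqdef
  set r : ℝ := ‖q‖ with hrdef
  have hr0 : 0 ≤ r := norm_nonneg q
  have hr : r < 1 := hq2
  obtain ⟨D, hD, hDle⟩ := real_pos_prod hr0 hr
  -- lower bound for finite products
  have hPlow : ∀ k, D ≤ ‖Pq q k‖ := by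
    intro k
    refine le_trans (hDle k) ?_
    rw [Pq, norm_prod]
    apply Finset.prod_le_prod
    · intro j _
      have : r^(j+1) < 1 := pow_lt_one₀ hr0 hr (Nat.succ_ne_zero j)
      linarith
    · intro j _
      have h1 := norm_sub_norm_le (1:ℂ) (q^(j+1))
      rw [norm_one, norm_pow] at h1
      exact h1
  -- upper bound for finite products
  have hPup : ∀ k, ‖Pq q k‖ ≤ Real.exp (r * (1-r)⁻¹) := by
    intro k
    rw [Pq, norm_prod]
    calc ∏ j ∈ Finset.range k, ‖1 - q^(j+1)‖
        ≤ ∏ j ∈ Finset.range k, Real.exp (r^(j+1)) := by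
          apply Finset.prod_le_prod (fun j _ => norm_nonneg _)
          intro j _
          calc ‖1 - q^(j+1)‖ ≤ ‖(1:ℂ)‖ + ‖q^(j+1)‖ := norm_sub_le _ _
            _ = 1 + r^(j+1) := by rw [norm_one, norm_pow]
            _ ≤ Real.exp (r^(j+1)) := by
                have := Real.add_one_le_exp (r^(j+1))
                linarith
      _ = Real.exp (∑ j ∈ Finset.range k, r^(j+1)) := (Real.exp_sum _ _).symm
      _ ≤ Real.exp (r * (1-r)⁻¹) := by
          apply Real.exp_le_exp.mpr
          have hsg : Summable (fun j : ℕ => r^(j+1)) :=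
            ((summable_geometric_of_lt_one hr0 hr).mul_left r).congr
              (fun j => by rw [pow_succ]; ring)
          calc ∑ j ∈ Finset.range k, r^(j+1)
              ≤ ∑' j : ℕ, r^(j+1) := Summable.sum_le_tsum _ (fun j _ => pow_nonneg hr0 _) hsg
            _ = r * (1-r)⁻¹ := by
                rw [tsum_congr (fun j : ℕ => by rw [pow_succ, mul_comm] : ∀ j : ℕ,
                  r^(j+1) = r * r^j), tsum_mul_left, tsum_geometric_of_lt_one hr0 hr]
  set C : ℝ := Real.exp (r * (1-r)⁻¹) / (D*D) with hCdef
  have hC0 : 0 ≤ C := div_nonneg (Real.exp_pos _).le (by positivity)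
  have hccbound : ∀ N (n : ℤ), ‖cc q N n‖ ≤ C := by
    intro N n
    unfold cc
    split
    · rw [norm_div, norm_mul]
      apply div_le_div₀ (Real.exp_pos _).le (hPup _) (by positivity)
      exact mul_le_mul (hPlow _) (hPlow _) hD.le (norm_nonneg _)
    · simpa using hC0
  -- infinite products
  have hones : ∀ j : ℕ, (1:ℂ) - q^(j+1) ≠ 0 := one_sub_pow_ne hq2
  have hcongr1 : (fun j : ℕ => 1 + -(q^(j+1))) = (fun j : ℕ => 1 - q^(j+1)) := by
    funext j; ring
  obtain ⟨hmultP, hPne⟩ := prod_one_add (f := fun j : ℕ => -(q^(j+1)))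
    ((summable_qpow hq2).neg) (fun j => by rw [← sub_eq_add_neg]; exact hones j)
  rw [hcongr1] at hmultP hPne
  set Pinf : ℂ := ∏' j : ℕ, (1 - q^(j+1)) with hPinf
  have hPtend : Tendsto (fun k => Pq q k) atTop (𝓝 Pinf) := by
    have := hmultP.hasProd.tendsto_prod_nat
    exact this
  -- cc limits
  have hcclim : ∀ n : ℤ, Tendsto (fun N => cc q N n) atTop (𝓝 (Pinf / (Pinf * Pinf))) := by
    intro n
    have h2N : Tendsto (fun N : ℕ => Pq q (2*N)) atTop (𝓝 Pinf) :=
      hPtend.comp (tendsto_atTop_atTop.mpr (fun b => ⟨b, fun N hN => by omega⟩))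
    have hA : Tendsto (fun N : ℕ => Pq q ((N:ℤ)+n).toNat) atTop (𝓝 Pinf) :=
      hPtend.comp (tendsto_atTop_atTop.mpr
        (fun b => ⟨b + n.natAbs, fun N hN => by omega⟩))
    have hB : Tendsto (fun N : ℕ => Pq q ((N:ℤ)-n).toNat) atTop (𝓝 Pinf) :=
      hPtend.comp (tendsto_atTop_atTop.mpr
        (fun b => ⟨b + n.natAbs, fun N hN => by omega⟩))
    have hdiv := h2N.div (hA.mul hB) (mul_ne_zero hPne hPne)
    apply hdiv.congr'
    filter_upwards [eventually_ge_atTop n.natAbs] with N hN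
    simp only [Pi.div_apply]
    unfold cc
    rw [if_pos hN]
  -- dominated convergence
  have hptwise : ∀ n : ℤ, Tendsto (fun N => gg Q x N n) atTop
      (𝓝 ((Pinf / (Pinf * Pinf)) * (Q^((n^2:ℤ)) * x^n))) := by
    intro n
    have := (hcclim n).mul_const (Q^((n^2:ℤ)) * x^n)
    apply this.congr
    intro N
    rw [gg, mul_assoc]
  have hdom : Tendsto (fun N => ∑' n : ℤ, gg Q x N n) atTop
      (𝓝 (∑' n : ℤ, (Pinf / (Pinf * Pinf)) * (Q^((n^2:ℤ)) * x^n))) := by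
    apply tendsto_tsum_of_dominated_convergence (bound := fun n : ℤ => C * ‖Q^((n^2:ℤ)) * x^n‖)
      (hsum.mul_left C) hptwise
    filter_upwards with N n
    rw [gg, mul_assoc, norm_mul]
    exact mul_le_mul_of_nonneg_right (hccbound N n) (norm_nonneg _)
  have hFS : ∀ N, ∑' n : ℤ, gg Q x N n = ∑ n ∈ Finset.Icc (-(N:ℤ)) N, gg Q x N n := by
    intro N
    apply tsum_eq_sum
    intro n hn
    apply gg_zero
    simp only [Finset.mem_Icc] at hn
    omega
  have hlim2 : Tendsto (fun N => ∏ j ∈ Finset.range N,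
      ((1 + x*Q^(2*j+1)) * (1 + x⁻¹*Q^(2*j+1)))) atTop
      (𝓝 (∑' n : ℤ, (Pinf / (Pinf * Pinf)) * (Q^((n^2:ℤ)) * x^n))) := by
    apply hdom.congr
    intro N
    rw [hFS N, finid hQ hQ0 hx N]
  have htsum_eq : ∑' n : ℤ, (Pinf / (Pinf * Pinf)) * (Q^((n^2:ℤ)) * x^n)
      = Pinf⁻¹ * ∑' n : ℤ, Q^((n^2:ℤ)) * x^n := by
    rw [tsum_mul_left]
    congr 1
    field_simp
  by_cases hz : ∀ j : ℕ, (1 + x*Q^(2*j+1)) ≠ 0 ∧ (1 + x⁻¹*Q^(2*j+1)) ≠ 0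
  · -- no vanishing factor
    have hesum : Summable (fun j : ℕ => x*Q^(2*j+1) + x⁻¹*Q^(2*j+1) + q^(2*j+1)) := by
      have h1 : Summable (fun j : ℕ => x*Q^(2*j+1)) := by
        apply ((summable_geometric_of_norm_lt_one hq2).mul_left (x*Q)).congr
        intro j
        rw [hqdef, ← pow_mul, pow_add, pow_one]
        ring
      have h2 : Summable (fun j : ℕ => x⁻¹*Q^(2*j+1)) := by
        apply ((summable_geometric_of_norm_lt_one hq2).mul_left (x⁻¹*Q)).congr
        intro j
        rw [hqdef, ← pow_mul, pow_add, pow_one]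
        ring
      have h3 : Summable (fun j : ℕ => (q:ℂ)^(2*j+1)) := by
        apply ((summable_geometric_of_norm_lt_one (show ‖q^2‖ < 1 by
          rw [norm_pow]; exact pow_lt_one₀ hr0 hr (by omega))).mul_left q).congr
        intro j
        rw [← pow_mul, pow_add, pow_one]
        ring
      exact (h1.add h2).add h3
    have hbr : (fun j : ℕ => 1 + (x*Q^(2*j+1) + x⁻¹*Q^(2*j+1) + q^(2*j+1)))
        = (fun j : ℕ => (1 + x*Q^(2*j+1)) * (1 + x⁻¹*Q^(2*j+1))) := by
      funext j
      have : (q:ℂ)^(2*j+1) = (x*Q^(2*j+1)) * (x⁻¹*Q^(2*j+1)) := by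
        rw [hqdef]
        field_simp
        ring
      rw [this]
      ring
    have hne2 : ∀ j : ℕ, (1:ℂ) + (x*Q^(2*j+1) + x⁻¹*Q^(2*j+1) + q^(2*j+1)) ≠ 0 := by
      intro j
      have hb := congrFun hbr j
      beta_reduce at hb
      rw [hb]
      exact mul_ne_zero (hz j).1 (hz j).2
    obtain ⟨hmult2, hP2ne⟩ := prod_one_add (f := fun j : ℕ =>
      x*Q^(2*j+1) + x⁻¹*Q^(2*j+1) + q^(2*j+1)) hesum (fun j => hne2 j)
    rw [hbr] at hmult2 hP2ne
    have hF2 : Tendsto (fun N => ∏ j ∈ Finset.range N,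
        ((1 + x*Q^(2*j+1)) * (1 + x⁻¹*Q^(2*j+1)))) atTop
        (𝓝 (∏' j : ℕ, ((1 + x*Q^(2*j+1)) * (1 + x⁻¹*Q^(2*j+1))))) :=
      hmult2.hasProd.tendsto_prod_nat
    have huniq := tendsto_nhds_unique hF2 hlim2
    rw [htsum_eq] at huniq
    rw [huniq, ← mul_assoc, mul_inv_cancel₀ hPne, one_mul]
  · -- a vanishing factor
    push_neg at hz
    obtain ⟨j₀, hj₀⟩ := hz
    have hfactor : (1 + x*Q^(2*j₀+1)) * (1 + x⁻¹*Q^(2*j₀+1)) = 0 := by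
      rcases Classical.em ((1 + x*Q^(2*j₀+1)) = 0) with h | h
      · rw [h, zero_mul]
      · rw [hj₀ h, mul_zero]
    have hprod0 : (∏' j : ℕ, ((1 + x*Q^(2*j+1)) * (1 + x⁻¹*Q^(2*j+1)))) = 0 :=
      (hasProd_zero_of_exists_zero hfactor).tprod_eq
    have hev0 : Tendsto (fun N => ∏ j ∈ Finset.range N,
        ((1 + x*Q^(2*j+1)) * (1 + x⁻¹*Q^(2*j+1)))) atTop (𝓝 (0:ℂ)) := by
      apply Filter.Tendsto.congr' _ (tendsto_const_nhds (x := (0:ℂ)) (f := atTop (α := ℕ)))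
      filter_upwards [eventually_ge_atTop (j₀+1)] with N hN
      exact (Finset.prod_eq_zero (Finset.mem_range.mpr (by omega)) hfactor).symm
    have huniq := tendsto_nhds_unique hev0 hlim2
    rw [htsum_eq] at huniq
    have : ∑' n : ℤ, Q^((n^2:ℤ)) * x^n = 0 := by
      have hPinv : (Pinf:ℂ)⁻¹ ≠ 0 := inv_ne_zero hPne
      have h0 : Pinf⁻¹ * ∑' n : ℤ, Q^((n^2:ℤ)) * x^n = 0 := huniq.symm
      rcases mul_eq_zero.mp h0 with h | h
      · exact absurd h hPinv
      · exact h
    rw [this, hprod0, mul_zero]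

lemma mult_bracket {Q x : ℂ} (hq2 : ‖Q^2‖ < 1) (hx : x ≠ 0) :
    Multipliable (fun j : ℕ => (1 + x*Q^(2*j+1)) * (1 + x⁻¹*Q^(2*j+1))) := by
  by_cases hz : ∀ j : ℕ, (1 + x*Q^(2*j+1)) ≠ 0 ∧ (1 + x⁻¹*Q^(2*j+1)) ≠ 0
  · have hesum : Summable (fun j : ℕ => x*Q^(2*j+1) + x⁻¹*Q^(2*j+1) + (Q^2)^(2*j+1)) := by
      have h1 : Summable (fun j : ℕ => x*Q^(2*j+1)) := by
        apply ((summable_geometric_of_norm_lt_one hq2).mul_left (x*Q)).congr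
        intro j
        rw [← pow_mul, pow_add, pow_one]
        ring
      have h2 : Summable (fun j : ℕ => x⁻¹*Q^(2*j+1)) := by
        apply ((summable_geometric_of_norm_lt_one hq2).mul_left (x⁻¹*Q)).congr
        intro j
        rw [← pow_mul, pow_add, pow_one]
        ring
      have h3 : Summable (fun j : ℕ => ((Q^2:ℂ))^(2*j+1)) := by
        apply ((summable_geometric_of_norm_lt_one (show ‖(Q^2)^2‖ < 1 by
          rw [norm_pow]; exact pow_lt_one₀ (norm_nonneg _) hq2 (by omega))).mul_left (Q^2)).congr
        intro j
        rw [← pow_mul, pow_add, pow_one]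
        ring
      exact (h1.add h2).add h3
    have hbr : (fun j : ℕ => 1 + (x*Q^(2*j+1) + x⁻¹*Q^(2*j+1) + (Q^2)^(2*j+1)))
        = (fun j : ℕ => (1 + x*Q^(2*j+1)) * (1 + x⁻¹*Q^(2*j+1))) := by
      funext j
      have : ((Q^2:ℂ))^(2*j+1) = (x*Q^(2*j+1)) * (x⁻¹*Q^(2*j+1)) := by
        field_simp
        ring
      rw [this]
      ring
    have hne2 : ∀ j : ℕ, (1:ℂ) + (x*Q^(2*j+1) + x⁻¹*Q^(2*j+1) + (Q^2)^(2*j+1)) ≠ 0 := by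
      intro j
      have hb := congrFun hbr j
      beta_reduce at hb
      rw [hb]
      exact mul_ne_zero (hz j).1 (hz j).2
    have := (prod_one_add hesum (fun j => hne2 j)).1
    rw [hbr] at this
    exact this
  · push_neg at hz
    obtain ⟨j₀, hj₀⟩ := hz
    have hfactor : (1 + x*Q^(2*j₀+1)) * (1 + x⁻¹*Q^(2*j₀+1)) = 0 := by
      rcases Classical.em ((1 + x*Q^(2*j₀+1)) = 0) with h | h
      · rw [h, zero_mul]
      · rw [hj₀ h, mul_zero]
    exact ⟨0, hasProd_zero_of_exists_zero hfactor⟩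

lemma term_eq (v τ : ℂ) (n : ℤ) :
    jacobiTheta₂_term n v τ
      = (Complex.exp ((π:ℂ)*I*τ))^((n^2:ℤ)) * (Complex.exp (2*(π:ℂ)*I*v))^n := by
  have h1 : 2*(π:ℂ)*I*n*v + (π:ℂ)*I*n^2*τ
      = ((n^2:ℤ):ℂ) * ((π:ℂ)*I*τ) + (n:ℂ)*(2*(π:ℂ)*I*v) := by
    push_cast
    ring
  rw [jacobiTheta₂_term, h1, Complex.exp_add, Complex.exp_int_mul, Complex.exp_int_mul]

lemma norm_exp_pi_tau_lt {τ : ℂ} (hτ : 0 < τ.im) : ‖Complex.exp ((π:ℂ)*I*τ)‖ < 1 := by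
  rw [Complex.norm_exp]
  apply Real.exp_lt_one_iff.mpr
  have : ((π:ℂ)*I*τ).re = -(π * τ.im) := by
    simp [Complex.mul_re, Complex.mul_im]
  rw [this]
  have := Real.pi_pos
  nlinarith

theorem theta3_product (v τ : ℂ) (hτ : 0 < τ.im) :
    (∏' j : ℕ, ((1 - Complex.exp (2*(π:ℂ)*I*τ) ^ (j + 1)) *
      (1 + Complex.exp (2*(π:ℂ)*I*v) * Complex.exp (2*(π:ℂ)*I*τ*((j:ℂ) + 1/2))) *
      (1 + Complex.exp (-(2*(π:ℂ)*I*v)) * Complex.exp (2*(π:ℂ)*I*τ*((j:ℂ) + 1/2)))))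
      = jacobiTheta₂ v τ := by
  set Q : ℂ := Complex.exp ((π:ℂ)*I*τ) with hQdef
  set x : ℂ := Complex.exp (2*(π:ℂ)*I*v) with hxdef
  have hQ : ‖Q‖ < 1 := norm_exp_pi_tau_lt hτ
  have hQ0 : Q ≠ 0 := Complex.exp_ne_zero _
  have hx : x ≠ 0 := Complex.exp_ne_zero _
  have hq2 : ‖Q^2‖ < 1 := by
    rw [norm_pow]
    exact pow_lt_one₀ (norm_nonneg Q) hQ (by omega)
  have hqQ : Complex.exp (2*(π:ℂ)*I*τ) = Q^2 := by
    rw [hQdef, ← Complex.exp_nat_mul]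
    norm_num
    ring_nf
  have hhalf : ∀ j : ℕ, Complex.exp (2*(π:ℂ)*I*τ*((j:ℂ) + 1/2)) = Q^(2*j+1) := by
    intro j
    rw [hQdef, ← Complex.exp_nat_mul]
    congr 1
    push_cast
    ring
  have hxinv : Complex.exp (-(2*(π:ℂ)*I*v)) = x⁻¹ := by
    rw [hxdef, ← Complex.exp_neg]
  have hterm : ∀ j : ℕ, ((1 - Complex.exp (2*(π:ℂ)*I*τ) ^ (j + 1)) *
      (1 + Complex.exp (2*(π:ℂ)*I*v) * Complex.exp (2*(π:ℂ)*I*τ*((j:ℂ) + 1/2))) *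
      (1 + Complex.exp (-(2*(π:ℂ)*I*v)) * Complex.exp (2*(π:ℂ)*I*τ*((j:ℂ) + 1/2))))
      = (1 - (Q^2)^(j+1)) * ((1 + x*Q^(2*j+1)) * (1 + x⁻¹*Q^(2*j+1))) := by
    intro j
    rw [hqQ, hhalf j, hxinv, ← hxdef, mul_assoc]
  rw [tprod_congr hterm]
  -- split the product
  have hones : ∀ j : ℕ, (1:ℂ) - (Q^2)^(j+1) ≠ 0 := one_sub_pow_ne hq2
  have hcongr1 : (fun j : ℕ => 1 + -((Q^2:ℂ)^(j+1))) = (fun j : ℕ => 1 - (Q^2)^(j+1)) := by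
    funext j; ring
  obtain ⟨hmultP, hPne⟩ := prod_one_add (f := fun j : ℕ => -((Q^2:ℂ)^(j+1)))
    ((summable_qpow hq2).neg) (fun j => by rw [← sub_eq_add_neg]; exact hones j)
  rw [hcongr1] at hmultP hPne
  have hmultB := mult_bracket hq2 hx
  rw [hmultP.tprod_mul hmultB]
  -- use master
  have hsum : Summable (fun n : ℤ => ‖Q^((n^2 : ℤ)) * x^n‖) := by
    have h0 : Summable (fun n : ℤ => jacobiTheta₂_term n v τ) :=
      (summable_jacobiTheta₂_term_iff v τ).mpr hτ
    have h1 : Summable (fun n : ℤ => ‖jacobiTheta₂_term n v τ‖) :=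
      summable_norm_iff.mpr h0
    apply h1.congr
    intro n
    rw [term_eq]
  have hmaster := master hQ hQ0 hx hsum
  rw [← hmaster]
  rw [jacobiTheta₂]
  exact (tsum_congr (fun n => term_eq v τ n)).symm

end JT3

theorem stmt3 (v τ : ℂ) (hτ : 0 < τ.im) :
    jTheta₃ v (τ + 1) = jTheta₂ v τ ∧
    jTheta₃ v (-1 / τ) =
      (τ / Complex.I) ^ ((1 : ℂ) / 2) *
        Complex.exp ((π : ℂ) * Complex.I * τ * v ^ 2) * jTheta₃ (τ * v) τ := by
  constructor
  · -- θ₃(v, τ+1) = θ₂(v, τ)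
    unfold jTheta₃ jTheta₂
    apply tprod_congr
    intro j
    have hq : jq (τ+1) = jq τ := by
      unfold jq
      rw [show 2*(π:ℂ)*Complex.I*(τ+1) = 2*(π:ℂ)*Complex.I*τ + 2*(π:ℂ)*Complex.I by ring,
        Complex.exp_add, Complex.exp_two_pi_mul_I, mul_one]
    have hhalf : Complex.exp (2*(π:ℂ)*Complex.I*(τ+1)*((j:ℂ)+1/2))
        = - Complex.exp (2*(π:ℂ)*Complex.I*τ*((j:ℂ)+1/2)) := by
      rw [show 2*(π:ℂ)*Complex.I*(τ+1)*((j:ℂ)+1/2)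
          = 2*(π:ℂ)*Complex.I*τ*((j:ℂ)+1/2) + ((j:ℕ):ℂ)*(2*(π:ℂ)*Complex.I)
            + (π:ℂ)*Complex.I by push_cast; ring,
        Complex.exp_add, Complex.exp_add, Complex.exp_nat_mul, Complex.exp_two_pi_mul_I,
        one_pow, mul_one, Complex.exp_pi_mul_I]
      ring
    rw [hq, hhalf]
    ring
  · -- the modular transformation
    have hτ0 : τ ≠ 0 := by
      intro h
      rw [h] at hτ
      simp at hτ
    have hτ' : 0 < (-1/τ).im := by
      have hpos := Complex.normSq_pos.mpr hτ0
      rw [neg_div, neg_im, one_div, Complex.inv_im, neg_div, neg_neg]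
      exact div_pos hτ hpos
    have h3a : jTheta₃ v (-1/τ) = jacobiTheta₂ v (-1/τ) := by
      unfold jTheta₃ jq
      exact JT3.theta3_product v (-1/τ) hτ'
    have h3b : jTheta₃ (τ*v) τ = jacobiTheta₂ (τ*v) τ := by
      unfold jTheta₃ jq
      exact JT3.theta3_product (τ*v) τ hτ
    rw [h3a, h3b]
    have FE := jacobiTheta₂_functional_equation (τ*v) τ
    have hdiv : (τ*v)/τ = v := by
      rw [mul_comm, mul_div_assoc, div_self hτ0, mul_one]
    have hexp : -(π:ℂ)*Complex.I*(τ*v)^2/τ = -((π:ℂ)*Complex.I*τ*v^2) := by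
      field_simp
    rw [hdiv, hexp] at FE
    have hsq : τ/Complex.I = -Complex.I*τ := by
      rw [div_eq_mul_inv, Complex.inv_I]
      ring
    have hne : ((-Complex.I*τ):ℂ) ^ ((1:ℂ)/2) ≠ 0 := by
      have hb : (-Complex.I*τ) ≠ 0 := mul_ne_zero (neg_ne_zero.mpr Complex.I_ne_zero) hτ0
      rw [Complex.cpow_def_of_ne_zero hb]
      exact Complex.exp_ne_zero _
    have he : Complex.exp ((π:ℂ)*Complex.I*τ*v^2) * Complex.exp (-((π:ℂ)*Complex.I*τ*v^2))
        = 1 := by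
      rw [← Complex.exp_add, add_neg_cancel, Complex.exp_zero]
    rw [hsq]
    calc jacobiTheta₂ v (-1/τ)
        = ((-Complex.I*τ)^((1:ℂ)/2) * (1/(-Complex.I*τ)^((1:ℂ)/2)))
            * (Complex.exp ((π:ℂ)*Complex.I*τ*v^2)
              * Complex.exp (-((π:ℂ)*Complex.I*τ*v^2))) * jacobiTheta₂ v (-1/τ) := by
          rw [mul_one_div, div_self hne, he, one_mul, one_mul]
      _ = (-Complex.I*τ)^((1:ℂ)/2) * Complex.exp ((π:ℂ)*Complex.I*τ*v^2)
            * (1/(-Complex.I*τ)^((1:ℂ)/2) * Complex.exp (-((π:ℂ)*Complex.I*τ*v^2))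
              * jacobiTheta₂ v (-1/τ)) := by ring
      _ = _ := by rw [← FE]
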